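/- Forward error of the Horner scheme in the standard model of floating point arithmetic: Let u be a real number with 0 < u, let n be a positive integer with 2n·u < 1, let x, a_0, …, a_n be real numbers, and let r_0, …, r_n be real numbers such that r_n = a_n and, for every i = n−1, …, 0, r_i = (r_{i+1}·x·(1+ε_i) + a_i)·(1+δ_i) for some real numbers ε_i, δ_i with |ε_i| ≤ u and |δ_i| ≤ u. Then |r_0 − Σ_{i=0}^n a_i x^i| ≤ γ_{2n} · Σ_{i=0}^n |a_i| |x|^i. -/

import Mathlib

lemma horner_arith (u P T X A v1 v2 v3 : ℝ) (hu : 0 < u) (hP : 1 ≤ P)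
    (hT : 0 ≤ T) (hX : 0 ≤ X) (hA : 0 ≤ A)
    (h1 : v1 ≤ (P - 1) * T * ((1 + u) * (1 + u)))
    (h2 : v2 ≤ T * (2 * u + u ^ 2))
    (h3 : v3 ≤ A * u) :
    X * v1 + X * v2 + v3 ≤ (P * ((1 + u) * (1 + u)) - 1) * (A + X * T) := by
  have hQu : 0 ≤ P * ((1 + u) * (1 + u)) - 1 - u := by nlinarith
  have hA' : 0 ≤ A * (P * ((1 + u) * (1 + u)) - 1 - u) := mul_nonneg hA hQu
  have k1 := mul_le_mul_of_nonneg_left h1 hX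
  have k2 := mul_le_mul_of_nonneg_left h2 hX
  nlinarith [k1, k2]

lemma horner_aux
    (u : ℝ) (hu : 0 < u) (n : ℕ)
    (x : ℝ) (a r ε δ : ℕ → ℝ)
    (hεu : ∀ i < n, |ε i| ≤ u) (hδu : ∀ i < n, |δ i| ≤ u)
    (hrn : r n = a n)
    (hrec : ∀ i < n, r i = (r (i + 1) * x * (1 + ε i) + a i) * (1 + δ i)) :
    ∀ m k, k + m = n →
      |r k - ∑ i ∈ Finset.range (m + 1), a (k + i) * x ^ i| ≤
        ((1 + u) ^ (2 * m) - 1) * ∑ i ∈ Finset.range (m + 1), |a (k + i)| * |x| ^ i := by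
  intro m
  induction m with
  | zero =>
    intro k hk
    have hk' : k = n := by omega
    subst hk'
    simp [hrn]
  | succ m ih =>
    intro k hk
    have hk1 : (k + 1) + m = n := by omega
    have hkn : k < n := by omega
    obtain ⟨s, hs_def⟩ : ∃ s, s = ∑ i ∈ Finset.range (m + 1), a (k + 1 + i) * x ^ i := ⟨_, rfl⟩
    obtain ⟨T, hT_def⟩ : ∃ T, T = ∑ i ∈ Finset.range (m + 1), |a (k + 1 + i)| * |x| ^ i := ⟨_, rfl⟩
    have hIH : |r (k + 1) - s| ≤ ((1 + u) ^ (2 * m) - 1) * T := by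
      rw [hs_def, hT_def]; exact ih (k + 1) hk1
    have hsum : (∑ i ∈ Finset.range (m + 1 + 1), a (k + i) * x ^ i) = a k + x * s := by
      rw [Finset.sum_range_succ', hs_def, Finset.mul_sum, add_comm]
      congr 1
      · simp
      · apply Finset.sum_congr rfl
        intro i _
        have h : k + (i + 1) = k + 1 + i := by omega
        rw [h]; ring
    have habs : (∑ i ∈ Finset.range (m + 1 + 1), |a (k + i)| * |x| ^ i) = |a k| + |x| * T := by
      rw [Finset.sum_range_succ', hT_def, Finset.mul_sum, add_comm]
      congr 1
      · simp
      · apply Finset.sum_congr rfl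
        intro i _
        have h : k + (i + 1) = k + 1 + i := by omega
        rw [h]; ring
    rw [hsum, habs]
    have hε := hεu k hkn
    have hδ := hδu k hkn
    have key : r k - (a k + x * s) =
        x * ((r (k + 1) - s) * ((1 + ε k) * (1 + δ k)))
          + x * (s * ((1 + ε k) * (1 + δ k) - 1)) + a k * δ k := by
      rw [hrec k hkn]; ring
    have hTpos : (0:ℝ) ≤ T := by
      rw [hT_def]
      apply Finset.sum_nonneg
      intro i _
      exact mul_nonneg (abs_nonneg _) (pow_nonneg (abs_nonneg _) _)
    have hsT : |s| ≤ T := by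
      rw [hs_def, hT_def]
      refine (Finset.abs_sum_le_sum_abs _ _).trans ?_
      apply Finset.sum_le_sum
      intro i _
      rw [abs_mul, abs_pow]
    have he1 : |1 + ε k| ≤ 1 + u := (abs_add_le _ _).trans (by rw [abs_one]; linarith)
    have hd1 : |1 + δ k| ≤ 1 + u := (abs_add_le _ _).trans (by rw [abs_one]; linarith)
    have hm : |(1 + ε k) * (1 + δ k) - 1| ≤ 2 * u + u ^ 2 := by
      have heq : (1 + ε k) * (1 + δ k) - 1 = (ε k + δ k) + ε k * δ k := by ring
      have h1 := abs_add_le (ε k + δ k) (ε k * δ k)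
      have h2 := abs_add_le (ε k) (δ k)
      have h3 : |ε k * δ k| ≤ u * u := by
        rw [abs_mul]; exact mul_le_mul hε hδ (abs_nonneg _) hu.le
      rw [heq]; nlinarith
    have hP1 : (1:ℝ) ≤ (1 + u) ^ (2 * m) := one_le_pow₀ (by linarith)
    have hpow : ((1:ℝ) + u) ^ (2 * (m + 1)) = (1 + u) ^ (2 * m) * ((1 + u) * (1 + u)) := by
      have h2m : 2 * (m + 1) = 2 * m + 2 := by omega
      rw [h2m, pow_add]; ring
    have t1 : |r (k + 1) - s| * (|1 + ε k| * |1 + δ k|) ≤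
        ((1 + u) ^ (2 * m) - 1) * T * ((1 + u) * (1 + u)) :=
      mul_le_mul hIH (mul_le_mul he1 hd1 (abs_nonneg _) (by linarith))
        (mul_nonneg (abs_nonneg _) (abs_nonneg _)) (mul_nonneg (by linarith) hTpos)
    have t2 : |s| * |(1 + ε k) * (1 + δ k) - 1| ≤ T * (2 * u + u ^ 2) :=
      mul_le_mul hsT hm (abs_nonneg _) hTpos
    have t3 : |a k| * |δ k| ≤ |a k| * u := mul_le_mul_of_nonneg_left hδ (abs_nonneg _)
    calc |r k - (a k + x * s)|
        ≤ |x * ((r (k + 1) - s) * ((1 + ε k) * (1 + δ k)))|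
            + |x * (s * ((1 + ε k) * (1 + δ k) - 1))| + |a k * δ k| := by
          rw [key]; exact (abs_add_le _ _).trans (by gcongr; exact abs_add_le _ _)
      _ = |x| * (|r (k + 1) - s| * (|1 + ε k| * |1 + δ k|))
            + |x| * (|s| * |(1 + ε k) * (1 + δ k) - 1|) + |a k| * |δ k| := by
          simp only [abs_mul]
      _ ≤ ((1 + u) ^ (2 * m) * ((1 + u) * (1 + u)) - 1) * (|a k| + |x| * T) :=
          horner_arith u _ T |x| |a k| _ _ _ hu hP1 hTpos (abs_nonneg x) (abs_nonneg _)
            t1 t2 t3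
      _ = ((1 + u) ^ (2 * (m + 1)) - 1) * (|a k| + |x| * T) := by rw [hpow]

/-- Forward error of the Horner scheme in the standard model of floating point
arithmetic. Here `γ_{2n} = 2n·u/(1 − 2n·u)`. -/
theorem horner_forward_error
    (u : ℝ) (hu : 0 < u) (n : ℕ) (hn : 1 ≤ n) (h2nu : 2 * (n : ℝ) * u < 1)
    (x : ℝ) (a r ε δ : ℕ → ℝ)
    (hεu : ∀ i < n, |ε i| ≤ u) (hδu : ∀ i < n, |δ i| ≤ u)
    (hrn : r n = a n)
    (hrec : ∀ i < n, r i = (r (i + 1) * x * (1 + ε i) + a i) * (1 + δ i)) :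
    |r 0 - ∑ i ∈ Finset.range (n + 1), a i * x ^ i| ≤
      (2 * (n : ℝ) * u / (1 - 2 * (n : ℝ) * u)) *
        ∑ i ∈ Finset.range (n + 1), |a i| * |x| ^ i := by
  have haux := horner_aux u hu n x a r ε δ hεu hδu hrn hrec n 0 (by omega)
  simp only [Nat.zero_add] at haux
  have hTnn : (0:ℝ) ≤ ∑ i ∈ Finset.range (n + 1), |a i| * |x| ^ i := by
    apply Finset.sum_nonneg
    intro i _
    exact mul_nonneg (abs_nonneg _) (pow_nonneg (abs_nonneg _) _)
  refine haux.trans (mul_le_mul_of_nonneg_right ?_ hTnn)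
  -- show (1+u)^(2n) - 1 ≤ 2nu/(1-2nu)
  set d : ℝ := 2 * (n : ℝ) * u with hd
  have hd0 : 0 < d := by positivity
  have hd1 : d < 1 := h2nu
  set c : ℝ := (1 + u) ^ (2 * n) with hc
  have hupos : (0:ℝ) < 1 + u := by linarith
  have hcpos : 0 < c := pow_pos hupos _
  have hber := one_add_mul_le_pow (a := -(u / (1 + u))) (by
    have : u / (1 + u) ≤ 1 := by
      rw [div_le_one hupos]; linarith
    linarith) (2 * n)
  have heq : (1 + -(u / (1 + u))) ^ (2 * n) = 1 / c := by
    have h1 : (1:ℝ) + -(u / (1 + u)) = 1 / (1 + u) := by field_simp; ring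
    rw [h1, hc, div_pow, one_pow]
  rw [heq] at hber
  have hcast : ((2 * n : ℕ) : ℝ) = 2 * (n : ℝ) := by push_cast; ring
  have h1c : 1 - d ≤ 1 / c := by
    refine le_trans ?_ hber
    rw [hcast]
    have : 2 * (n : ℝ) * (u / (1 + u)) ≤ d := by
      rw [hd]
      have hn0 : (0:ℝ) ≤ 2 * (n : ℝ) := by positivity
      have : u / (1 + u) ≤ u := by
        rw [div_le_iff₀ hupos]; nlinarith
      nlinarith
    linarith
  have hcd : c * (1 - d) ≤ 1 := by
    have := mul_le_mul_of_nonneg_left h1c hcpos.le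
    rwa [mul_one_div, div_self hcpos.ne'] at this
  rw [le_div_iff₀ (by linarith : (0:ℝ) < 1 - d)]
  nlinarith
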